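/- The origin is a Lyapunov stable equilibrium of the 5-component Maxwell–Bloch system: for every ε > 0 there exists δ > 0 such that every differentiable solution γ : ℝ → ℝ⁵ of the system with ‖γ(0)‖ < δ satisfies ‖γ(t)‖ < ε for all t ≥ 0. -/

import Mathlib

lemma mb_const_of_deriv_zero (f : ℝ → ℝ) (h : ∀ t, HasDerivAt f 0 t) (t : ℝ) :
    f t = f 0 :=
  is_const_of_deriv_eq_zero (fun x => (h x).differentiableAt) (fun x => (h x).deriv) t 0

/-- The origin is a Lyapunov stable equilibrium of the 5-component Maxwell–Bloch system:
for every `ε > 0` there is `δ > 0` such that every solution starting within (Euclidean)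
distance `δ` of the origin stays within distance `ε` for all `t ≥ 0`. -/
theorem maxwell_bloch_origin_stable :
    ∀ ε > (0 : ℝ), ∃ δ > (0 : ℝ), ∀ x1 y1 x2 y2 z : ℝ → ℝ,
      (∀ t, HasDerivAt x1 (y1 t) t) →
      (∀ t, HasDerivAt y1 (x1 t * z t) t) →
      (∀ t, HasDerivAt x2 (y2 t) t) →
      (∀ t, HasDerivAt y2 (x2 t * z t) t) →
      (∀ t, HasDerivAt z (-(x1 t * y1 t + x2 t * y2 t)) t) →
      Real.sqrt ((x1 0) ^ 2 + (y1 0) ^ 2 + (x2 0) ^ 2 + (y2 0) ^ 2 + (z 0) ^ 2) < δ →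
      ∀ t ≥ (0 : ℝ),
        Real.sqrt ((x1 t) ^ 2 + (y1 t) ^ 2 + (x2 t) ^ 2 + (y2 t) ^ 2 + (z t) ^ 2) < ε := by
  intro ε hε
  refine ⟨min 1 (ε ^ 2 / 7), by positivity, ?_⟩
  intro x1 y1 x2 y2 z hx1 hy1 hx2 hy2 hz h0 t _
  set δ := min 1 (ε ^ 2 / 7) with hδdef
  have hδ1 : δ ≤ 1 := min_le_left _ _
  have hδ2 : δ ≤ ε ^ 2 / 7 := min_le_right _ _
  have hδ0 : (0 : ℝ) < δ := by positivity
  -- H = y1² + y2² + z² is conserved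
  have hS : ∀ s, y1 s ^ 2 + y2 s ^ 2 + z s ^ 2 = y1 0 ^ 2 + y2 0 ^ 2 + z 0 ^ 2 := by
    apply mb_const_of_deriv_zero
    intro s
    have h := (((hy1 s).pow 2).add ((hy2 s).pow 2)).add ((hz s).pow 2)
    exact h.congr_deriv (by ring)
  -- C (doubled) = x1² + x2² + 2z is conserved
  have hG : ∀ s, x1 s ^ 2 + x2 s ^ 2 + 2 * z s = x1 0 ^ 2 + x2 0 ^ 2 + 2 * z 0 := by
    apply mb_const_of_deriv_zero
    intro s
    have h := (((hx1 s).pow 2).add ((hx2 s).pow 2)).add ((hz s).const_mul 2)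
    exact h.congr_deriv (by ring)
  -- initial smallness
  have h0' : x1 0 ^ 2 + y1 0 ^ 2 + x2 0 ^ 2 + y2 0 ^ 2 + z 0 ^ 2 < δ ^ 2 :=
    (Real.sqrt_lt' hδ0).mp h0
  have hz0 : z 0 < δ := by
    nlinarith [sq_nonneg (x1 0), sq_nonneg (y1 0), sq_nonneg (x2 0), sq_nonneg (y2 0), sq_nonneg (z 0 + δ)]
  have hSt := hS t
  have hGt := hG t
  have hzt : -δ < z t := by
    nlinarith [sq_nonneg (y1 t), sq_nonneg (y2 t), sq_nonneg (x1 0), sq_nonneg (x2 0), sq_nonneg (z t + δ), sq_nonneg (z t - δ)]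
  have key : x1 t ^ 2 + y1 t ^ 2 + x2 t ^ 2 + y2 t ^ 2 + z t ^ 2 < ε ^ 2 := by
    nlinarith [sq_nonneg (y1 0), sq_nonneg (y2 0), sq_nonneg (z 0)]
  exact (Real.sqrt_lt' hε).mpr key
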